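/- Let τ_1 ≤ ... ≤ τ_n be positive reals and R a positive integer. Define s* = min{s ≥ 0 : ∑_{i=1}^n ⌊s/τ_i⌋ ≥ R} and t(R) = 2 min_{m∈[n]} [(∑_{i=1}^m 1/τ_i)^{-1}(R + m)]. Then s* ≤ t(R). -/

import Mathlib

theorem stmt_17 (n : ℕ) (hn : 1 ≤ n) (τ : ℕ → ℝ)
    (hτpos : ∀ i ∈ Finset.Icc 1 n, 0 < τ i)
    (hτmono : ∀ i ∈ Finset.Icc 1 n, ∀ j ∈ Finset.Icc 1 n, i ≤ j → τ i ≤ τ j)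
    (R : ℕ) (hR : 1 ≤ R) :
    sInf {s : ℝ | 0 ≤ s ∧ (R : ℤ) ≤ ∑ i ∈ Finset.Icc 1 n, ⌊s / τ i⌋}
      ≤ 2 * (Finset.Icc 1 n).inf' (Finset.nonempty_Icc.mpr hn)
          (fun m => (∑ i ∈ Finset.Icc 1 m, (τ i)⁻¹)⁻¹ * ((R : ℝ) + m)) := by
  obtain ⟨m, hm, hfm⟩ := Finset.exists_mem_eq_inf' (Finset.nonempty_Icc.mpr hn)
      (fun m => (∑ i ∈ Finset.Icc 1 m, (τ i)⁻¹)⁻¹ * ((R : ℝ) + m))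
  rw [hfm]
  obtain ⟨hm1, hmn⟩ := Finset.mem_Icc.mp hm
  have hsub : Finset.Icc 1 m ⊆ Finset.Icc 1 n := Finset.Icc_subset_Icc_right hmn
  set S : ℝ := ∑ i ∈ Finset.Icc 1 m, (τ i)⁻¹ with hS
  have hSpos : 0 < S :=
    Finset.sum_pos (fun i hi => inv_pos.mpr (hτpos i (hsub hi)))
      (Finset.nonempty_Icc.mpr hm1)
  set t : ℝ := S⁻¹ * ((R : ℝ) + m) with ht
  have ht0 : 0 ≤ 2 * t := by
    have : 0 ≤ (R : ℝ) + m := by positivity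
    positivity
  have hsum : (R : ℤ) ≤ ∑ i ∈ Finset.Icc 1 n, ⌊2 * t / τ i⌋ := by
    have h1 : ∑ i ∈ Finset.Icc 1 m, ⌊2 * t / τ i⌋ ≤
        ∑ i ∈ Finset.Icc 1 n, ⌊2 * t / τ i⌋ := by
      apply Finset.sum_le_sum_of_subset_of_nonneg hsub
      intro i hi _
      exact Int.floor_nonneg.mpr (div_nonneg ht0 (hτpos i hi).le)
    refine le_trans ?_ h1
    have h2 : (R : ℝ) ≤ (∑ i ∈ Finset.Icc 1 m, ⌊2 * t / τ i⌋ : ℤ) := by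
      push_cast
      have h3 : ∑ i ∈ Finset.Icc 1 m, (2 * t / τ i - 1) ≤
          ∑ i ∈ Finset.Icc 1 m, ((⌊2 * t / τ i⌋ : ℝ)) :=
        Finset.sum_le_sum (fun i hi => (Int.sub_one_lt_floor _).le)
      have h4 : ∑ i ∈ Finset.Icc 1 m, (2 * t / τ i - 1) = 2 * t * S - m := by
        rw [Finset.sum_sub_distrib, Finset.sum_const, Nat.card_Icc]
        simp only [div_eq_mul_inv, ← Finset.mul_sum, ← hS]
        simp [hm1]
      have h5 : 2 * t * S = 2 * ((R : ℝ) + m) := by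
        rw [ht]; field_simp
      have hmR : (R : ℝ) ≤ 2 * t * S - m := by
        rw [h5]
        have : (0:ℝ) ≤ R + m := by positivity
        nlinarith
      linarith [h4 ▸ h3]
    exact_mod_cast h2
  have hmem : 2 * t ∈ {s : ℝ | 0 ≤ s ∧ (R : ℤ) ≤ ∑ i ∈ Finset.Icc 1 n, ⌊s / τ i⌋} :=
    ⟨ht0, hsum⟩
  calc sInf {s : ℝ | 0 ≤ s ∧ (R : ℤ) ≤ ∑ i ∈ Finset.Icc 1 n, ⌊s / τ i⌋}
      ≤ 2 * t := csInf_le ⟨0, fun x hx => hx.1⟩ hmem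
    _ = 2 * (S⁻¹ * ((R : ℝ) + m)) := by rw [ht]
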